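/- Let f : ℝⁿ → ℝ be a multivariate quartic polynomial. Then for every x ∈ ℝⁿ and t > 0, the derivative with respect to t of the gradient ∇_x μ_f satisfies ∇_{tx} μ_f(x,t) = (t/3)·Σ_{i=1}^n ∇f_{ii}(x), where f_{ii} := ∂²f/∂x_i². -/

import Mathlib

open MeasureTheory Matrix Filter

/-- Partial derivative of `f` in the `i`-th coordinate direction. -/
noncomputable def pd {n : ℕ} (i : Fin n) (f : (Fin n → ℝ) → ℝ) : (Fin n → ℝ) → ℝ :=
  fun x => fderiv ℝ f x (Pi.single i 1)

/-- The gradient of `f` at `x`, as a vector of first partial derivatives. -/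
noncomputable def grad {n : ℕ} (f : (Fin n → ℝ) → ℝ) (x : Fin n → ℝ) : Fin n → ℝ :=
  fun i => pd i f x

/-- The Hessian matrix of `f` at `x`, of second partial derivatives. -/
noncomputable def hess {n : ℕ} (f : (Fin n → ℝ) → ℝ) (x : Fin n → ℝ) :
    Matrix (Fin n) (Fin n) ℝ :=
  Matrix.of fun i j => pd i (pd j f) x

/-- The Steklov function `μ_f(x,t) = (1/(2t)^n) ∫_{x-t}^{x+t} ⋯ ∫ f`. -/
noncomputable def steklov {n : ℕ} (f : (Fin n → ℝ) → ℝ) (x : Fin n → ℝ) (t : ℝ) : ℝ :=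
  (1 / (2 * t) ^ n) * ∫ τ in Set.univ.pi (fun i => Set.Icc (x i - t) (x i + t)), f τ

/-- `f` is a multivariate quartic polynomial: a polynomial of total degree at most 4. -/
def IsMQP {n : ℕ} (f : (Fin n → ℝ) → ℝ) : Prop :=
  ∃ P : MvPolynomial (Fin n) ℝ, P.totalDegree ≤ 4 ∧ ∀ x, f x = MvPolynomial.eval x P

/-- The closed Euclidean (ℓ₂) ball of radius `L` centered at `0` in `ℝⁿ`. -/
def ball2 {n : ℕ} (L : ℝ) : Set (Fin n → ℝ) := {y | ∑ i, (y i) ^ 2 ≤ L ^ 2}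

/-- The Euclidean (ℓ₂) norm of a vector. -/
noncomputable def l2norm {m : ℕ} (v : Fin m → ℝ) : ℝ := Real.sqrt (∑ i, (v i) ^ 2)

/- ================= Auxiliary material ================= -/

open MvPolynomial

section Aux

lemma hasFDerivAt_mvpoly {n : ℕ} (P : MvPolynomial (Fin n) ℝ) (y : Fin n → ℝ) :
    HasFDerivAt (fun z => eval z P)
      (∑ j, eval y (pderiv j P) • (ContinuousLinearMap.proj j : (Fin n → ℝ) →L[ℝ] ℝ)) y := by
  induction P using MvPolynomial.induction_on with
  | C a =>
      simp only [eval_C, pderiv_C, map_zero, zero_smul, Finset.sum_const_zero]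
      exact hasFDerivAt_const a y
  | add p q hp hq =>
      simp only [map_add, add_smul, Finset.sum_add_distrib, eval_add]
      exact hp.add hq
  | mul_X p i hp =>
      have hXi : HasFDerivAt (fun z : Fin n → ℝ => z i)
          (ContinuousLinearMap.proj i : (Fin n → ℝ) →L[ℝ] ℝ) y :=
        (ContinuousLinearMap.proj i : (Fin n → ℝ) →L[ℝ] ℝ).hasFDerivAt
      have key : HasFDerivAt (fun z => eval z p * z i) _ y := hp.mul hXi
      simp only [eval_mul, eval_X] at key ⊢
      refine key.congr_fderiv ?_
      apply ContinuousLinearMap.ext; intro v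
      have hterm : ∀ j : Fin n, eval y (pderiv j (p * X i)) * v j
          = eval y (pderiv j p) * y i * v j + (if j = i then eval y p * v j else 0) := by
        intro j
        rcases eq_or_ne j i with h | h
        · subst h; simp only [pderiv_mul, pderiv_X, map_add, _root_.map_mul, eval_X,
            Pi.single_eq_same, _root_.map_one, eq_self_iff_true, if_true]; ring
        · simp [pderiv_mul, pderiv_X, h, Pi.single_eq_of_ne h, mul_comm]
      simp only [ContinuousLinearMap.coe_sum', Finset.sum_apply, ContinuousLinearMap.coe_smul',
        Pi.smul_apply, ContinuousLinearMap.proj_apply, smul_eq_mul, ContinuousLinearMap.add_apply]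
      rw [Finset.sum_congr rfl fun j _ => hterm j, Finset.sum_add_distrib,
        Finset.sum_ite_eq' Finset.univ i (fun j => eval y p * v j)]
      simp [Finset.mul_sum, mul_comm, mul_assoc, mul_left_comm, add_comm]

lemma pd_eval {n : ℕ} (i : Fin n) (P : MvPolynomial (Fin n) ℝ) :
    pd i (fun z => eval z P) = fun y => eval y (pderiv i P) := by
  funext y
  rw [pd, (hasFDerivAt_mvpoly P y).fderiv]
  simp only [ContinuousLinearMap.coe_sum', Finset.sum_apply, ContinuousLinearMap.coe_smul',
    Pi.smul_apply, ContinuousLinearMap.proj_apply, smul_eq_mul, Pi.single_apply]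
  simp [Finset.sum_ite_eq', mul_ite, mul_one, mul_zero]

noncomputable def MAux (a t : ℝ) (k : ℕ) : ℝ :=
  1/(2*t) * (((a+t)^(k+1) - (a-t)^(k+1))/(k+1))

lemma MAux_zero (a t : ℝ) (ht : t ≠ 0) : MAux a t 0 = 1 := by
  rw [MAux]; field_simp; ring
lemma MAux_one (a t : ℝ) (ht : t ≠ 0) : MAux a t 1 = a := by
  rw [MAux]; field_simp; ring
lemma MAux_two (a t : ℝ) (ht : t ≠ 0) : MAux a t 2 = a^2 + t^2/3 := by
  rw [MAux]; field_simp; ring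
lemma MAux_three (a t : ℝ) (ht : t ≠ 0) : MAux a t 3 = a^3 + t^2 * a := by
  rw [MAux]; field_simp; ring
lemma MAux_four (a t : ℝ) (ht : t ≠ 0) : MAux a t 4 = a^4 + 2*t^2*a^2 + t^4/5 := by
  rw [MAux]; field_simp; ring

lemma box_integral_pow {n : ℕ} (d : Fin n → ℕ) (x : Fin n → ℝ) (t : ℝ) (ht : 0 < t) :
    (∫ τ in Set.univ.pi (fun i => Set.Icc (x i - t) (x i + t)), ∏ i, (τ i) ^ (d i))
      = ∏ i, (((x i + t)^(d i + 1) - (x i - t)^(d i + 1))/((d i : ℝ)+1)) := by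
  have hms : MeasurableSet (Set.univ.pi fun i => Set.Icc (x i - t) (x i + t)) :=
    MeasurableSet.univ_pi fun i => measurableSet_Icc
  rw [← MeasureTheory.integral_indicator hms]
  have hind : ∀ τ : Fin n → ℝ,
      (Set.univ.pi fun i => Set.Icc (x i - t) (x i + t)).indicator
        (fun τ => ∏ i, (τ i) ^ (d i)) τ
      = ∏ i, (Set.Icc (x i - t) (x i + t)).indicator (fun s => s ^ (d i)) (τ i) := by
    intro τ
    by_cases h : τ ∈ Set.univ.pi fun i => Set.Icc (x i - t) (x i + t)
    · rw [Set.indicator_of_mem h]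
      exact Finset.prod_congr rfl fun i _ =>
        (Set.indicator_of_mem (h i (Set.mem_univ i)) _).symm
    · rw [Set.indicator_of_notMem h]
      rw [Set.mem_pi] at h
      push_neg at h
      obtain ⟨i, _, hi⟩ := h
      exact (Finset.prod_eq_zero (Finset.mem_univ i)
        (by rw [Set.indicator_of_notMem hi])).symm
  simp_rw [hind]
  rw [MeasureTheory.integral_fintype_prod_volume_eq_prod
    (f := fun i s => (Set.Icc (x i - t) (x i + t)).indicator (fun u => u ^ (d i)) s)]
  refine Finset.prod_congr rfl fun i _ => ?_
  rw [MeasureTheory.integral_indicator measurableSet_Icc,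
    MeasureTheory.integral_Icc_eq_integral_Ioc,
    ← intervalIntegral.integral_of_le (by linarith : x i - t ≤ x i + t),
    integral_pow]

lemma steklov_monomial_prod {n : ℕ} (d : Fin n → ℕ) (x : Fin n → ℝ) (t : ℝ) (ht : 0 < t) :
    (1 / (2 * t) ^ n) *
      (∫ τ in Set.univ.pi (fun i => Set.Icc (x i - t) (x i + t)), ∏ i, (τ i) ^ (d i))
      = ∏ i, MAux (x i) t (d i) := by
  rw [box_integral_pow d x t ht]
  rw [show (1 / (2*t)^n : ℝ) = ∏ _i : Fin n, (1/(2*t)) by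
    rw [Finset.prod_const, Finset.card_univ, Fintype.card_fin, one_div, one_div, inv_pow]]
  rw [← Finset.prod_mul_distrib]
  exact Finset.prod_congr rfl fun i _ => by rw [MAux]

lemma prodMAux_expand {n : ℕ} (d : Fin n → ℕ) (s : Finset (Fin n))
    (hpos : ∀ i ∈ s, 1 ≤ d i) (hsum : ∑ i ∈ s, d i ≤ 4) :
    ∃ c : ℝ, ((∑ i ∈ s, d i ≤ 3) → c = 0) ∧ ∀ (x : Fin n → ℝ) (t : ℝ), t ≠ 0 →
      ∏ i ∈ s, MAux (x i) t (d i)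
        = (∏ i ∈ s, x i ^ d i)
          + t^2/6 * (∑ i ∈ s, (d i : ℝ) * ((d i - 1 : ℕ) : ℝ) * x i ^ (d i - 2)
              * ∏ j ∈ s.erase i, x j ^ d j)
          + t^4 * c := by
  induction s using Finset.induction_on with
  | empty => exact ⟨0, fun _ => rfl, fun x t ht => by simp⟩
  | @insert a s ha IH =>
    have hka : 1 ≤ d a := hpos a (Finset.mem_insert_self a s)
    have hposs : ∀ i ∈ s, 1 ≤ d i := fun i hi => hpos i (Finset.mem_insert_of_mem hi)
    rw [Finset.sum_insert ha] at hsum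
    obtain ⟨c', hc'0, hIH⟩ := IH hposs (by omega)
    set σ : ℝ := ∑ i ∈ s, (d i : ℝ) * ((d i - 1 : ℕ) : ℝ) with hσ
    have hS0 : (∑ i ∈ s, d i) ≤ 1 → ∀ x : Fin n → ℝ,
        (∑ i ∈ s, (d i : ℝ) * ((d i - 1 : ℕ) : ℝ) * x i ^ (d i - 2)
          * ∏ j ∈ s.erase i, x j ^ d j) = 0 := by
      intro hm x
      refine Finset.sum_eq_zero fun i hi => ?_
      have h1 : d i ≤ 1 :=
        le_trans (Finset.single_le_sum (f := d) (fun _ _ => Nat.zero_le _) hi) hm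
      have h0 : d i - 1 = 0 := by omega
      rw [h0]; simp
    have hσ0 : (∑ i ∈ s, d i) ≤ 1 → σ = 0 := by
      intro hm
      refine Finset.sum_eq_zero fun i hi => ?_
      have h1 : d i ≤ 1 :=
        le_trans (Finset.single_le_sum (f := d) (fun _ _ => Nat.zero_le _) hi) hm
      have h0 : d i - 1 = 0 := by omega
      rw [h0]; simp
    have hSconst : (∑ i ∈ s, d i) ≤ 2 → ∀ x : Fin n → ℝ,
        (∑ i ∈ s, (d i : ℝ) * ((d i - 1 : ℕ) : ℝ) * x i ^ (d i - 2)
          * ∏ j ∈ s.erase i, x j ^ d j) = σ := by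
      intro hm x
      refine Finset.sum_congr rfl fun i hi => ?_
      rcases le_or_gt (d i) 1 with h1 | h1
      · have h0 : d i - 1 = 0 := by omega
        rw [h0]; simp
      · have h2 : d i = 2 := by
          have := Finset.single_le_sum (f := d) (fun _ _ => Nat.zero_le _) hi; omega
        have her : s.erase i = ∅ := by
          have hse : d i + ∑ j ∈ s.erase i, d j = ∑ j ∈ s, d j :=
            Finset.add_sum_erase s d hi
          refine Finset.eq_empty_of_forall_notMem fun j hj => ?_
          have h1j : 1 ≤ d j := hposs j (Finset.mem_of_mem_erase hj)
          have := Finset.single_le_sum (f := d) (fun _ _ => Nat.zero_le _) hj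
          omega
        rw [her, h2]; simp
    have Hsum : ∀ x : Fin n → ℝ,
        (∑ i ∈ s, (d i : ℝ) * ((d i - 1 : ℕ) : ℝ) * x i ^ (d i - 2)
          * ∏ j ∈ (insert a s).erase i, x j ^ d j)
        = x a ^ d a * ∑ i ∈ s, (d i : ℝ) * ((d i - 1 : ℕ) : ℝ) * x i ^ (d i - 2)
          * ∏ j ∈ s.erase i, x j ^ d j := by
      intro x
      rw [Finset.mul_sum]
      refine Finset.sum_congr rfl fun i hi => ?_
      have hia : i ≠ a := fun h => ha (h ▸ hi)
      rw [Finset.erase_insert_of_ne (Ne.symm hia),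
        Finset.prod_insert (fun h => ha (Finset.mem_of_mem_erase h))]
      ring
    have hda4 : d a = 1 ∨ d a = 2 ∨ d a = 3 ∨ d a = 4 := by omega
    rcases hda4 with h | h | h | h
    · refine ⟨0, fun _ => rfl, fun x t ht => ?_⟩
      rw [Finset.prod_insert ha, Finset.prod_insert ha, Finset.sum_insert ha,
        Finset.erase_insert ha, Hsum x, hIH x t ht, hc'0 (by omega), h,
        MAux_one (x a) t ht]
      norm_num; ring
    · refine ⟨σ/18, ?_, fun x t ht => ?_⟩
      · intro hc
        rw [Finset.sum_insert ha, h] at hc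
        rw [hσ0 (by omega)]; norm_num
      · rw [Finset.prod_insert ha, Finset.prod_insert ha, Finset.sum_insert ha,
          Finset.erase_insert ha, Hsum x, hIH x t ht, hSconst (by omega) x,
          hc'0 (by omega), h, MAux_two (x a) t ht]
        norm_num; ring
    · refine ⟨0, fun _ => rfl, fun x t ht => ?_⟩
      rw [Finset.prod_insert ha, Finset.prod_insert ha, Finset.sum_insert ha,
        Finset.erase_insert ha, Hsum x, hIH x t ht, hS0 (by omega) x,
        hc'0 (by omega), h, MAux_three (x a) t ht]
      norm_num; ring
    · have hm0 : ∑ i ∈ s, d i = 0 := by omega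
      have hsempty : s = ∅ := by
        refine Finset.eq_empty_of_forall_notMem fun j hj => ?_
        have h1j : 1 ≤ d j := hposs j hj
        have := Finset.single_le_sum (f := d) (fun _ _ => Nat.zero_le _) hj
        omega
      subst hsempty
      refine ⟨1/5, fun hc => ?_, fun x t ht => ?_⟩
      · rw [Finset.sum_insert ha, h] at hc; omega
      · rw [Finset.prod_insert ha, Finset.prod_insert ha, Finset.sum_insert ha,
          Finset.erase_insert ha, h, MAux_four (x a) t ht]
        simp; ring

lemma prodMAux_univ {n : ℕ} (d : Fin n →₀ ℕ) (hd : (∑ i ∈ d.support, d i) ≤ 4) :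
    ∃ c : ℝ, ∀ (x : Fin n → ℝ) (t : ℝ), t ≠ 0 →
      ∏ i, MAux (x i) t (d i) = (∏ i, x i ^ d i)
        + t^2/6 * (∑ i, (d i : ℝ) * ((d i - 1 : ℕ) : ℝ) * x i ^ (d i - 2)
            * ∏ j ∈ Finset.univ.erase i, x j ^ d j)
        + t^4 * c := by
  obtain ⟨c, _, hc⟩ := prodMAux_expand (fun i => d i) d.support
    (fun i hi => Nat.one_le_iff_ne_zero.mpr (Finsupp.mem_support_iff.mp hi)) hd
  refine ⟨c, fun x t ht => ?_⟩
  have B1 : ∏ i ∈ d.support, MAux (x i) t (d i) = ∏ i, MAux (x i) t (d i) :=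
    Finset.prod_subset (Finset.subset_univ _) (fun i _ hi => by
      rw [Finsupp.notMem_support_iff.mp hi, MAux_zero _ _ ht])
  have B2 : ∏ i ∈ d.support, x i ^ d i = ∏ i, x i ^ d i :=
    Finset.prod_subset (Finset.subset_univ _) (fun i _ hi => by
      rw [Finsupp.notMem_support_iff.mp hi, pow_zero])
  have B3 : (∑ i ∈ d.support, (d i : ℝ) * ((d i - 1 : ℕ) : ℝ) * x i ^ (d i - 2)
      * ∏ j ∈ d.support.erase i, x j ^ d j)
      = ∑ i, (d i : ℝ) * ((d i - 1 : ℕ) : ℝ) * x i ^ (d i - 2)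
          * ∏ j ∈ Finset.univ.erase i, x j ^ d j := by
    have hin : ∀ i : Fin n, (∏ j ∈ d.support.erase i, x j ^ d j)
        = ∏ j ∈ Finset.univ.erase i, x j ^ d j := by
      intro i
      refine Finset.prod_subset (Finset.erase_subset_erase _ (Finset.subset_univ _))
        (fun j hju hj => ?_)
      have hji : j ≠ i := (Finset.mem_erase.mp hju).1
      have hns : j ∉ d.support := fun hs => hj (Finset.mem_erase.mpr ⟨hji, hs⟩)
      rw [Finsupp.notMem_support_iff.mp hns, pow_zero]
    rw [Finset.sum_subset (Finset.subset_univ _) (fun i _ hi => by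
      rw [Finsupp.notMem_support_iff.mp hi]; simp)]
    exact Finset.sum_congr rfl fun i _ => by rw [hin i]
  rw [← B1, hc x t ht, B2, B3]

lemma eval_pderiv2_monomial {n : ℕ} (d : Fin n →₀ ℕ) (r : ℝ) (x : Fin n → ℝ) :
    eval x (∑ i, pderiv i (pderiv i (monomial d r)))
      = r * ∑ i, (d i : ℝ) * ((d i - 1 : ℕ) : ℝ) * x i ^ (d i - 2)
          * ∏ j ∈ Finset.univ.erase i, x j ^ d j := by
  rw [map_sum, Finset.mul_sum]
  refine Finset.sum_congr rfl fun i _ => ?_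
  rw [pderiv_monomial, pderiv_monomial, eval_monomial]
  have h1 : (d - Finsupp.single i 1 : Fin n →₀ ℕ) i = d i - 1 := by
    rw [Finsupp.tsub_apply, Finsupp.single_eq_same]
  rw [h1, Finsupp.prod_pow,
    ← Finset.mul_prod_erase Finset.univ _ (Finset.mem_univ i)]
  have h2 : (d - Finsupp.single i 1 - Finsupp.single i 1 : Fin n →₀ ℕ) i = d i - 2 := by
    rw [Finsupp.tsub_apply, Finsupp.tsub_apply, Finsupp.single_eq_same]; omega
  have h3 : ∀ j, j ≠ i → (d - Finsupp.single i 1 - Finsupp.single i 1 : Fin n →₀ ℕ) j = d j := by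
    intro j hj
    rw [Finsupp.tsub_apply, Finsupp.tsub_apply, Finsupp.single_eq_of_ne hj,
      Nat.sub_zero, Nat.sub_zero]
  rw [h2, Finset.prod_congr rfl (fun j hj => by rw [h3 j (Finset.ne_of_mem_erase hj)])]
  ring

lemma steklov_master {n : ℕ} (P : MvPolynomial (Fin n) ℝ) (hP : P.totalDegree ≤ 4) :
    ∃ c : ℝ, ∀ (x : Fin n → ℝ) (t : ℝ), 0 < t →
      steklov (fun y => eval y P) x t
        = eval x P + t^2/6 * eval x (∑ i, pderiv i (pderiv i P)) + t^4 * c := by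
  have H : ∀ d : Fin n →₀ ℕ, ∃ c : ℝ, d ∈ P.support →
      ∀ (x : Fin n → ℝ) (t : ℝ), t ≠ 0 →
        ∏ i, MAux (x i) t (d i) = (∏ i, x i ^ d i)
          + t^2/6 * (∑ i, (d i : ℝ) * ((d i - 1 : ℕ) : ℝ) * x i ^ (d i - 2)
              * ∏ j ∈ Finset.univ.erase i, x j ^ d j)
          + t^4 * c := by
    intro d
    by_cases hd : d ∈ P.support
    · have hd4 : (∑ i ∈ d.support, d i) ≤ 4 :=
        le_trans (MvPolynomial.le_totalDegree hd) hP
      obtain ⟨c, hc⟩ := prodMAux_univ d hd4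
      exact ⟨c, fun _ => hc⟩
    · exact ⟨0, fun h => absurd h hd⟩
  choose cc hcc using H
  refine ⟨∑ d ∈ P.support, coeff d P * cc d, fun x t ht => ?_⟩
  have htne : t ≠ 0 := ne_of_gt ht
  have hfeq : ∀ τ : Fin n → ℝ, eval τ P = ∑ d ∈ P.support, coeff d P * ∏ i, τ i ^ d i := by
    intro τ
    conv_lhs => rw [P.as_sum]
    rw [map_sum]
    exact Finset.sum_congr rfl fun d _ => by rw [eval_monomial, Finsupp.prod_pow]
  have hbox : IsCompact (Set.univ.pi fun i => Set.Icc (x i - t) (x i + t)) :=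
    isCompact_univ_pi fun i => isCompact_Icc
  have hint : ∀ d : Fin n →₀ ℕ, IntegrableOn
      (fun τ : Fin n → ℝ => coeff d P * ∏ i, τ i ^ d i)
      (Set.univ.pi fun i => Set.Icc (x i - t) (x i + t)) volume := by
    intro d
    exact ((continuous_const.mul
      (continuous_finset_prod _ fun i _ => (continuous_apply i).pow _)).continuousOn).integrableOn_compact hbox
  have hI : (∫ τ in Set.univ.pi (fun i => Set.Icc (x i - t) (x i + t)), eval τ P)
      = ∑ d ∈ P.support, coeff d P *
        ∫ τ in Set.univ.pi (fun i => Set.Icc (x i - t) (x i + t)), ∏ i, τ i ^ d i := by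
    simp_rw [hfeq]
    rw [integral_finset_sum _ (fun d _ => hint d)]
    exact Finset.sum_congr rfl fun d _ => integral_const_mul _ _
  rw [steklov, hI, Finset.mul_sum]
  have hterm : ∀ d ∈ P.support,
      (1 / (2*t)^n) * (coeff d P *
        ∫ τ in Set.univ.pi (fun i => Set.Icc (x i - t) (x i + t)), ∏ i, τ i ^ d i)
      = coeff d P * ((∏ i, x i ^ d i)
          + t^2/6 * (∑ i, (d i : ℝ) * ((d i - 1 : ℕ) : ℝ) * x i ^ (d i - 2)
              * ∏ j ∈ Finset.univ.erase i, x j ^ d j)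
          + t^4 * cc d) := by
    intro d hd
    rw [mul_left_comm, steklov_monomial_prod d x t ht, hcc d hd x t htne]
  rw [Finset.sum_congr rfl hterm]
  have hQ : eval x (∑ i, pderiv i (pderiv i P))
      = ∑ d ∈ P.support, coeff d P *
          (∑ i, (d i : ℝ) * ((d i - 1 : ℕ) : ℝ) * x i ^ (d i - 2)
            * ∏ j ∈ Finset.univ.erase i, x j ^ d j) := by
    have : (∑ i, pderiv i (pderiv i P))
        = ∑ d ∈ P.support, ∑ i, pderiv i (pderiv i (monomial d (coeff d P))) := by
      conv_lhs => rw [P.as_sum]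
      rw [Finset.sum_comm]
      exact Finset.sum_congr rfl fun i _ => by rw [map_sum, map_sum]
    rw [this, map_sum]
    exact Finset.sum_congr rfl fun d _ => eval_pderiv2_monomial d (coeff d P) x
  rw [hQ, hfeq x, Finset.mul_sum, Finset.mul_sum]
  rw [← Finset.sum_add_distrib, ← Finset.sum_add_distrib]
  exact Finset.sum_congr rfl fun d _ => by ring

end Aux

/-- For a multivariate quartic polynomial `f`, the derivative with respect to `t` of the
gradient `∇ₓ μ_f` satisfies `∇ₜₓ μ_f(x,t) = (t/3) Σᵢ ∇f_{ii}(x)`. -/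
theorem steklov_t_gradient {n : ℕ} (f : (Fin n → ℝ) → ℝ) (hf : IsMQP f)
    (x : Fin n → ℝ) (t : ℝ) (ht : 0 < t) :
    (fun i => deriv (fun s => grad (fun y => steklov f y s) x i) t)
      = (t / 3) • ∑ i, grad (pd i (pd i f)) x := by
  obtain ⟨P, hP4, hfP⟩ := hf
  have hfe : f = fun x => eval x P := funext hfP
  subst hfe
  obtain ⟨c, hc⟩ := steklov_master P hP4
  set Q : MvPolynomial (Fin n) ℝ := ∑ i, pderiv i (pderiv i P) with hQdef
  funext i
  have hstep : ∀ s : ℝ, 0 < s →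
      grad (fun y => steklov (fun z => eval z P) y s) x i
        = eval x (pderiv i P) + s^2/6 * eval x (pderiv i Q) := by
    intro s hs
    have hfun : (fun y => steklov (fun z => eval z P) y s)
        = fun y => eval y (P + MvPolynomial.C (s^2/6) * Q + MvPolynomial.C (s^4 * c)) := by
      funext y
      rw [hc y s hs]
      simp only [eval_add, _root_.map_mul, eval_C]
    rw [grad, hfun, pd_eval]
    simp only [map_add, pderiv_C_mul, pderiv_C, add_zero, eval_add, _root_.map_mul, eval_C, _root_.map_zero, mul_zero]
  have hev : (fun s => grad (fun y => steklov (fun z => eval z P) y s) x i)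
      =ᶠ[nhds t] fun s => eval x (pderiv i P) + s^2/6 * eval x (pderiv i Q) := by
    filter_upwards [Ioi_mem_nhds ht] with s hs using hstep s hs
  rw [hev.deriv_eq]
  have hD : HasDerivAt (fun s : ℝ => eval x (pderiv i P) + s^2/6 * eval x (pderiv i Q))
      (t/3 * eval x (pderiv i Q)) t := by
    have h1 : HasDerivAt (fun s : ℝ => s^2) ((2:ℕ) * t ^ 1) t := hasDerivAt_pow 2 t
    have h2 := ((h1.div_const 6).mul_const (eval x (pderiv i Q))).const_add
      (eval x (pderiv i P))
    refine h2.congr_deriv ?_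
    push_cast
    ring
  rw [hD.deriv]
  have hj : ∀ j : Fin n, grad (pd j (pd j (fun z => eval z P))) x i
      = eval x (pderiv i (pderiv j (pderiv j P))) := by
    intro j
    rw [pd_eval j P, pd_eval j (pderiv j P), grad, pd_eval i (pderiv j (pderiv j P))]
  rw [Pi.smul_apply, Finset.sum_apply, Finset.sum_congr rfl fun j _ => hj j, smul_eq_mul]
  congr 1
  rw [hQdef, map_sum, map_sum]
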